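/- For all positive even integers m: the infinite series sum_{n=1}^{∞} arctan(F_{2m} / F_{2n+2m-1}) converges and equals sum_{n=1}^{m} arctan(L_m / L_{2n+m-1}). -/

import Mathlib

open Real Filter Finset Topology
open scoped goldenRatio

def lucasNat : ℕ → ℕ
  | 0 => 2
  | 1 => 1
  | (n + 2) => lucasNat (n + 1) + lucasNat n

lemma lucasNat_pos : ∀ n : ℕ, 0 < lucasNat n
  | 0 => by simp [lucasNat]
  | 1 => by simp [lucasNat]
  | (n + 2) => by
      rw [lucasNat]; exact Nat.add_pos_left (lucasNat_pos (n + 1)) _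

lemma lucasNat_ge : ∀ n : ℕ, n ≤ lucasNat n
  | 0 => by simp [lucasNat]
  | 1 => le_refl _
  | (n + 2) => by
      rw [lucasNat]
      have h1 := lucasNat_ge (n + 1)
      have h2 := lucasNat_pos n
      omega

lemma lucasNat_real : ∀ n : ℕ, (lucasNat n : ℝ) = φ ^ n + ψ ^ n
  | 0 => by norm_num [lucasNat]
  | 1 => by
      show ((1 : ℕ) : ℝ) = φ ^ 1 + ψ ^ 1
      rw [pow_one, pow_one, goldenRatio_add_goldenConj]; norm_num
  | (n + 2) => by
      have h1 := lucasNat_real (n + 1)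
      have h2 := lucasNat_real n
      show ((lucasNat (n + 1) + lucasNat n : ℕ) : ℝ) = _
      push_cast
      rw [h1, h2]
      have e1 : φ ^ (n + 2) = φ ^ (n + 1) + φ ^ n := by
        rw [pow_add, goldenRatio_sq, pow_add, pow_one]; ring
      have e2 : ψ ^ (n + 2) = ψ ^ (n + 1) + ψ ^ n := by
        rw [pow_add, goldenConj_sq, pow_add, pow_one]; ring
      rw [e1, e2]; ring

/-- The key Fibonacci–Lucas identity, proven via Binet's formula. -/
lemma keyE (n j : ℕ) :
    (lucasNat (2 * j) : ℝ) * ((lucasNat (2 * n + 6 * j + 1) : ℝ) - lucasNat (2 * n + 2 * j + 1)) *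
        Nat.fib (2 * n + 4 * j + 1)
      = (Nat.fib (4 * j) : ℝ) *
        ((lucasNat (2 * n + 2 * j + 1) : ℝ) * lucasNat (2 * n + 6 * j + 1) +
          (lucasNat (2 * j) : ℝ) ^ 2) := by
  have hψ : (ψ : ℝ) = -φ⁻¹ := by rw [inv_goldenRatio]; ring
  have h5 : (Real.sqrt 5 : ℝ) = φ - ψ := goldenRatio_sub_goldenConj.symm
  have r1 : ∀ x : ℝ, x ^ (2 * n + 6 * j + 1) = x ^ (2 * n) * (x ^ (2 * j)) ^ 3 * x := by
    intro x
    rw [show 2 * n + 6 * j + 1 = 2 * n + 2 * j * 3 + 1 by ring, pow_add, pow_add, pow_mul x (2 * j) 3,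
      pow_one]
  have r2 : ∀ x : ℝ, x ^ (2 * n + 2 * j + 1) = x ^ (2 * n) * x ^ (2 * j) * x := by
    intro x
    rw [pow_add, pow_add, pow_one]
  have r3 : ∀ x : ℝ, x ^ (2 * n + 4 * j + 1) = x ^ (2 * n) * (x ^ (2 * j)) ^ 2 * x := by
    intro x
    rw [show 2 * n + 4 * j + 1 = 2 * n + 2 * j * 2 + 1 by ring, pow_add, pow_add, pow_mul x (2 * j) 2,
      pow_one]
  have r4 : ∀ x : ℝ, x ^ (4 * j) = (x ^ (2 * j)) ^ 2 := by
    intro x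
    rw [show 4 * j = 2 * j * 2 by ring, pow_mul x (2 * j) 2]
  have hmul : ∀ k : ℕ, (φ : ℝ) ^ (2 * k) * ψ ^ (2 * k) = 1 := by
    intro k
    rw [← mul_pow, goldenRatio_mul_goldenConj, pow_mul]
    norm_num
  have hB : (ψ : ℝ) ^ (2 * n) = (φ ^ (2 * n))⁻¹ :=
    eq_inv_of_mul_eq_one_left (by rw [mul_comm]; exact hmul n)
  have hQ : (ψ : ℝ) ^ (2 * j) = (φ ^ (2 * j))⁻¹ :=
    eq_inv_of_mul_eq_one_left (by rw [mul_comm]; exact hmul j)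
  rw [Real.coe_fib_eq, Real.coe_fib_eq, lucasNat_real, lucasNat_real, lucasNat_real, h5,
    r1 φ, r1 ψ, r2 φ, r2 ψ, r3 φ, r3 ψ, r4 φ, r4 ψ, hB, hQ, hψ]
  have hA0 : (φ : ℝ) ^ (2 * n) ≠ 0 := pow_ne_zero _ goldenRatio_ne_zero
  have hP0 : (φ : ℝ) ^ (2 * j) ≠ 0 := pow_ne_zero _ goldenRatio_ne_zero
  have hφ0 : (φ : ℝ) ≠ 0 := goldenRatio_ne_zero
  field_simp
  ring

lemma term_eq (n j : ℕ) :
    Real.arctan ((Nat.fib (4 * j) : ℝ) / Nat.fib (2 * n + 4 * j + 1))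
      = Real.arctan ((lucasNat (2 * j) : ℝ) / lucasNat (2 * n + 2 * j + 1))
        - Real.arctan ((lucasNat (2 * j) : ℝ) / lucasNat (2 * n + 6 * j + 1)) := by
  set c : ℝ := (lucasNat (2 * j) : ℝ) with hc
  set a : ℝ := (lucasNat (2 * n + 2 * j + 1) : ℝ) with ha
  set b : ℝ := (lucasNat (2 * n + 6 * j + 1) : ℝ) with hb
  have hcpos : 0 < c := by rw [hc]; exact_mod_cast lucasNat_pos _
  have hapos : 0 < a := by rw [ha]; exact_mod_cast lucasNat_pos _
  have hbpos : 0 < b := by rw [hb]; exact_mod_cast lucasNat_pos _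
  have hFpos : (0 : ℝ) < Nat.fib (2 * n + 4 * j + 1) := by
    exact_mod_cast Nat.fib_pos.mpr (by omega)
  set x : ℝ := c / a with hx
  set y : ℝ := c / b with hy
  have hxpos : 0 < x := div_pos hcpos hapos
  have hypos : 0 < y := div_pos hcpos hbpos
  have hlt : x * (-y) < 1 := lt_of_le_of_lt (by nlinarith) one_pos
  have hadd := Real.arctan_add hlt
  rw [Real.arctan_neg] at hadd
  have hden : (0 : ℝ) < a * b + c ^ 2 := by positivity
  have hfrac : (x + -y) / (1 - x * -y) = c * (b - a) / (a * b + c ^ 2) := by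
    rw [hx, hy]
    have h1 : (1 - c/a * -(c/b)) = (a * b + c ^ 2) / (a * b) := by field_simp; ring
    rw [h1]
    field_simp
    ring
  have hmain : (Nat.fib (4 * j) : ℝ) / Nat.fib (2 * n + 4 * j + 1)
      = c * (b - a) / (a * b + c ^ 2) := by
    rw [div_eq_div_iff hFpos.ne' hden.ne']
    linear_combination - keyE n j
  rw [hmain, ← hfrac, ← hadd]
  ring

theorem stmt18 (m : ℕ) (hm : 0 < m) (hme : Even m) :
    HasSum (fun n : ℕ => Real.arctan ((Nat.fib (2 * m) : ℝ) / Nat.fib (2 * (n + 1) + 2 * m - 1)))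
      (∑ n ∈ Finset.Icc 1 m, Real.arctan ((lucasNat m : ℝ) / lucasNat (2 * n + m - 1))) := by
  obtain ⟨j, hj⟩ : ∃ j, m = 2 * j := by
    obtain ⟨r, hr⟩ := hme; exact ⟨r, by omega⟩
  have hj1 : 1 ≤ j := by omega
  set g : ℕ → ℝ := fun k => Real.arctan ((lucasNat (2 * j) : ℝ) / lucasNat (2 * k + 2 * j + 1))
    with hg
  have hf : ∀ n : ℕ,
      Real.arctan ((Nat.fib (2 * m) : ℝ) / Nat.fib (2 * (n + 1) + 2 * m - 1))
        = g n - g (n + m) := by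
    intro n
    rw [show 2 * (n + 1) + 2 * m - 1 = 2 * n + 4 * j + 1 by omega,
      show 2 * m = 4 * j by omega]
    rw [term_eq n j, hg]
    simp only []
    rw [show 2 * (n + m) + 2 * j + 1 = 2 * n + 6 * j + 1 by omega]
  -- the right-hand side equals ∑ k in range m, g k
  have hrhs : (∑ n ∈ Finset.Icc 1 m, Real.arctan ((lucasNat m : ℝ) / lucasNat (2 * n + m - 1)))
      = ∑ k ∈ Finset.range m, g k := by
    rw [← Finset.Ico_add_one_right_eq_Icc, Finset.sum_Ico_eq_sum_range]
    apply Finset.sum_congr (by simp)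
    intro i _
    rw [hg]
    simp only []
    rw [show 2 * (1 + i) + m - 1 = 2 * i + 2 * j + 1 by omega, show m = 2 * j from hj]
  rw [hrhs]
  have hnonneg : ∀ n : ℕ,
      0 ≤ Real.arctan ((Nat.fib (2 * m) : ℝ) / Nat.fib (2 * (n + 1) + 2 * m - 1)) := by
    intro n
    rw [← Real.arctan_zero]
    apply Real.arctan_strictMono.monotone
    positivity
  rw [hasSum_iff_tendsto_nat_of_nonneg hnonneg]
  have hpartial : ∀ N : ℕ,
      (∑ i ∈ Finset.range N,
          Real.arctan ((Nat.fib (2 * m) : ℝ) / Nat.fib (2 * (i + 1) + 2 * m - 1)))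
        = (∑ k ∈ Finset.range m, g k) - ∑ k ∈ Finset.range m, g (N + k) := by
    intro N
    induction N with
    | zero => simp
    | succ N ih =>
        rw [Finset.sum_range_succ, ih, hf N]
        have tel : ∑ k ∈ Finset.range m, (g (N + k) - g (N + (k + 1))) = g (N + 0) - g (N + m) :=
          Finset.sum_range_sub' (fun k => g (N + k)) m
        rw [Finset.sum_sub_distrib] at tel
        have : ∑ k ∈ Finset.range m, g (N + 1 + k) = ∑ k ∈ Finset.range m, g (N + (k + 1)) :=
          Finset.sum_congr rfl fun k _ => by rw [show N + 1 + k = N + (k + 1) by omega]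
        rw [this]
        rw [Nat.add_zero] at tel
        linarith [tel]
  simp only [hpartial]
  have hzero : ∀ k : ℕ, Tendsto (fun N : ℕ => g (N + k)) atTop (𝓝 0) := by
    intro k
    have hdenom : Tendsto (fun N : ℕ => (lucasNat (2 * (N + k) + 2 * j + 1) : ℝ)) atTop atTop := by
      apply tendsto_atTop_mono (fun N => ?_) tendsto_natCast_atTop_atTop
      have h1 : N ≤ lucasNat (2 * (N + k) + 2 * j + 1) := by
        have := lucasNat_ge (2 * (N + k) + 2 * j + 1)
        omega
      exact_mod_cast h1
    have hdiv : Tendsto (fun N : ℕ => (lucasNat (2 * j) : ℝ) / lucasNat (2 * (N + k) + 2 * j + 1))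
        atTop (𝓝 0) := Tendsto.div_atTop tendsto_const_nhds hdenom
    have := (Real.continuous_arctan.tendsto 0).comp hdiv
    rwa [Real.arctan_zero] at this
  have : Tendsto (fun N : ℕ => (∑ k ∈ Finset.range m, g k) - ∑ k ∈ Finset.range m, g (N + k))
      atTop (𝓝 ((∑ k ∈ Finset.range m, g k) - 0)) := by
    apply Tendsto.sub tendsto_const_nhds
    have := tendsto_finset_sum (Finset.range m) (fun k _ => hzero k)
    simpa using this
  simpa using this
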